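/- Let 0 < β₁₂₁ < 1, 0 < β₂₂ < 1 with λ₂ := β₁₂₁/β₂₂ < 1, and let (β_{12j})_{j≥1} satisfy 0 ≤ β_{12j} ≤ β₁₂₁ for all j. Let g_{2,1}, …, g_{2,t} ∈ ℝ^{n×d}, define m_{2,t} = β_{12t} m_{2,t−1} + (1−β_{12t}) g_{2,t} with m_{2,0} = 0, and let v̂_{2,t} ∈ ℝ^{n×d} satisfy, entrywise, v̂_{2,t} ≥ (1−β₂₂) Σ_{j=1}^t β₂₂^{t−j} g_{2,j} ⊙ g_{2,j}. Then ‖(1/√v̂_{2,t}) ⊙ m_{2,t}‖² ≤ n·d / ( (1−β₁₂₁)(1−β₂₂)(1−λ₂) ), where entries with v̂_{2,t} = 0 are interpreted as 0. -/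

import Mathlib

open Finset

private lemma sum_shift_aux (r : ℝ) (x : ℕ → ℝ) (s : ℕ) :
    ∑ j ∈ Finset.Icc 1 (s + 1), r ^ (s + 1 - j) * x j
      = r * ∑ j ∈ Finset.Icc 1 s, r ^ (s - j) * x j + x (s + 1) := by
  rw [Finset.sum_Icc_succ_top (Nat.le_add_left 1 s), Finset.mul_sum]
  simp only [Nat.sub_self, pow_zero, one_mul]
  congr 1
  refine Finset.sum_congr rfl fun j hj => ?_
  rw [Finset.mem_Icc] at hj
  have : s + 1 - j = (s - j) + 1 := by omega
  rw [this, pow_succ]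
  ring

/-- Lemma 5, bound (3) of the paper.  With time-varying decay
parameters `0 ≤ β_{12j} ≤ β₁₂₁`, the second-layer first-moment recursion
`m_{2,t} = β_{12t} m_{2,t−1} + (1−β_{12t}) g_{2,t}` (started at `0`), and any
`v̂_{2,t}` dominating entrywise the exponential moving average
`(1−β₂₂) Σ_{j=1}^t β₂₂^{t−j} g_{2,j} ⊙ g_{2,j}`, if `λ₂ = β₁₂₁/β₂₂ < 1` then
`‖(1/√v̂_{2,t}) ⊙ m_{2,t}‖² ≤ n·d/((1−β₁₂₁)(1−β₂₂)(1−λ₂))` in the Frobenius norm.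
(Entries with `v̂_{2,t} = 0` contribute `0`; Lean's division by zero is zero.) -/
theorem dnnAdam_second_layer_moment_normalized_bound
    (n d t : ℕ)
    (β₁₂₁ β₂₂ : ℝ) (hβ₁ : 0 < β₁₂₁) (hβ₁' : β₁₂₁ < 1) (hβ₂ : 0 < β₂₂) (hβ₂' : β₂₂ < 1)
    (hlam : β₁₂₁ / β₂₂ < 1)
    (β : ℕ → ℝ) (hβ0 : ∀ j, 0 ≤ β j) (hβub : ∀ j, β j ≤ β₁₂₁)
    (g : ℕ → Matrix (Fin n) (Fin d) ℝ)
    (m : ℕ → Matrix (Fin n) (Fin d) ℝ) (hm0 : ∀ p q, m 0 p q = 0)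
    (hm : ∀ j p q, m (j + 1) p q = β (j + 1) * m j p q + (1 - β (j + 1)) * g (j + 1) p q)
    (vhat : Matrix (Fin n) (Fin d) ℝ)
    (hvhat : ∀ p q,
      (1 - β₂₂) * ∑ j ∈ Finset.Icc 1 t, β₂₂ ^ (t - j) * (g j p q) ^ 2 ≤ vhat p q) :
    ∑ p, ∑ q, (m t p q / Real.sqrt (vhat p q)) ^ 2
      ≤ (n : ℝ) * (d : ℝ) / ((1 - β₁₂₁) * (1 - β₂₂) * (1 - β₁₂₁ / β₂₂)) := by
  have h1β₁ : (0:ℝ) < 1 - β₁₂₁ := by linarith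
  have h1β₂ : (0:ℝ) < 1 - β₂₂ := by linarith
  have honelam : (0:ℝ) < 1 - β₁₂₁ / β₂₂ := by linarith
  have hβ₁β₂ : β₁₂₁ ≤ β₂₂ := by
    have := (div_lt_one hβ₂).mp hlam
    linarith
  set A : ℝ := (1 - β₁₂₁) * (1 - β₂₂) * (1 - β₁₂₁ / β₂₂) with hA
  have hApos : 0 < A := by positivity
  set B : ℝ := 1 / A with hB
  have hBpos : 0 < B := by positivity
  -- geometric sum bound
  have hS1 : ∀ s : ℕ, ∑ j ∈ Finset.Icc 1 s, β₁₂₁ ^ (s - j) * (1:ℝ) ≤ 1 / (1 - β₁₂₁) := by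
    intro s
    induction s with
    | zero => simp; linarith
    | succ s ih =>
        rw [sum_shift_aux]
        have : β₁₂₁ * ∑ j ∈ Finset.Icc 1 s, β₁₂₁ ^ (s - j) * (1:ℝ)
            ≤ β₁₂₁ * (1 / (1 - β₁₂₁)) := by
          exact mul_le_mul_of_nonneg_left ih hβ₁.le
        have heq : β₁₂₁ * (1 / (1 - β₁₂₁)) + 1 = 1 / (1 - β₁₂₁) := by
          field_simp
          ring
        linarith
  have key : ∀ p q, (m t p q / Real.sqrt (vhat p q)) ^ 2 ≤ B := by
    intro p q
    have habs : ∀ s : ℕ, |m s p q| ≤ ∑ j ∈ Finset.Icc 1 s, β₁₂₁ ^ (s - j) * |g j p q| := by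
      intro s
      induction s with
      | zero => simp [hm0]
      | succ s ih =>
          rw [sum_shift_aux, hm s p q]
          have h1 : |β (s+1) * m s p q + (1 - β (s+1)) * g (s+1) p q|
              ≤ β (s+1) * |m s p q| + (1 - β (s+1)) * |g (s+1) p q| := by
            calc _ ≤ |β (s+1) * m s p q| + |(1 - β (s+1)) * g (s+1) p q| := abs_add_le _ _
              _ = β (s+1) * |m s p q| + (1 - β (s+1)) * |g (s+1) p q| := by
                  rw [abs_mul, abs_mul, abs_of_nonneg (hβ0 (s+1)),
                    abs_of_nonneg (by have := hβub (s+1); linarith : (0:ℝ) ≤ 1 - β (s+1))]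
          have h2 : β (s+1) * |m s p q| ≤ β₁₂₁ * |m s p q| :=
            mul_le_mul_of_nonneg_right (hβub (s+1)) (abs_nonneg _)
          have h3 : (1 - β (s+1)) * |g (s+1) p q| ≤ |g (s+1) p q| := by
            have := hβ0 (s+1)
            nlinarith [abs_nonneg (g (s+1) p q)]
          have h4 : β₁₂₁ * |m s p q|
              ≤ β₁₂₁ * ∑ j ∈ Finset.Icc 1 s, β₁₂₁ ^ (s - j) * |g j p q| :=
            mul_le_mul_of_nonneg_left ih hβ₁.le
          linarith
    set T : ℝ := ∑ j ∈ Finset.Icc 1 t, β₂₂ ^ (t - j) * (g j p q) ^ 2 with hT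
    have hTnn : 0 ≤ T := Finset.sum_nonneg fun j _ => by positivity
    have hvnn : 0 ≤ vhat p q := le_trans (by positivity) (hvhat p q)
    -- Cauchy–Schwarz
    have hCS : (∑ j ∈ Finset.Icc 1 t, β₁₂₁ ^ (t - j) * |g j p q|) ^ 2
        ≤ (∑ j ∈ Finset.Icc 1 t, β₁₂₁ ^ (t - j) * (1:ℝ))
          * ∑ j ∈ Finset.Icc 1 t, β₁₂₁ ^ (t - j) * (g j p q) ^ 2 := by
      refine Finset.sum_sq_le_sum_mul_sum_of_sq_eq_mul _
        (fun j _ => by positivity) (fun j _ => by positivity) (fun j _ => ?_)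
      rw [mul_pow, sq_abs]
      ring
    have hS2T : ∑ j ∈ Finset.Icc 1 t, β₁₂₁ ^ (t - j) * (g j p q) ^ 2 ≤ T := by
      refine Finset.sum_le_sum fun j _ => ?_
      have := pow_le_pow_left₀ hβ₁.le hβ₁β₂ (t - j)
      nlinarith [sq_nonneg (g j p q)]
    have hm2 : (m t p q) ^ 2 ≤ (1 / (1 - β₁₂₁)) * T := by
      have h0 : (m t p q) ^ 2 = |m t p q| ^ 2 := (sq_abs _).symm
      have hsum_nn : 0 ≤ ∑ j ∈ Finset.Icc 1 t, β₁₂₁ ^ (t - j) * |g j p q| :=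
        Finset.sum_nonneg fun j _ => by positivity
      have h1 : |m t p q| ^ 2 ≤ (∑ j ∈ Finset.Icc 1 t, β₁₂₁ ^ (t - j) * |g j p q|) ^ 2 :=
        pow_le_pow_left₀ (abs_nonneg _) (habs t) 2
      have hS1nn : 0 ≤ ∑ j ∈ Finset.Icc 1 t, β₁₂₁ ^ (t - j) * (1:ℝ) :=
        Finset.sum_nonneg fun j _ => by positivity
      calc (m t p q) ^ 2 = |m t p q| ^ 2 := h0
        _ ≤ (∑ j ∈ Finset.Icc 1 t, β₁₂₁ ^ (t - j) * |g j p q|) ^ 2 := h1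
        _ ≤ (∑ j ∈ Finset.Icc 1 t, β₁₂₁ ^ (t - j) * (1:ℝ))
              * ∑ j ∈ Finset.Icc 1 t, β₁₂₁ ^ (t - j) * (g j p q) ^ 2 := hCS
        _ ≤ (1 / (1 - β₁₂₁)) * T := by
            apply mul_le_mul (hS1 t) hS2T
              (Finset.sum_nonneg fun j _ => by positivity) (by positivity)
    rcases eq_or_lt_of_le hvnn with hv0 | hvpos
    · rw [← hv0, Real.sqrt_zero, div_zero]
      simpa using hBpos.le
    · rw [div_pow, Real.sq_sqrt hvnn, div_le_iff₀ hvpos]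
      have hvT : (1 - β₂₂) * T ≤ vhat p q := hvhat p q
      have hBA : B * A = 1 := by
        rw [hB]; field_simp
      have honelamle : 1 - β₁₂₁ / β₂₂ ≤ 1 := by
        have : 0 ≤ β₁₂₁ / β₂₂ := by positivity
        linarith
      -- m² ≤ T/(1-β₁) and B * vhat ≥ B*(1-β₂)*T = T/((1-β₁)(1-λ)) ≥ T/(1-β₁)
      have hc : 1 / (1 - β₁₂₁) ≤ B * (1 - β₂₂) := by
        have hBe : B * (1 - β₂₂) = 1 / ((1 - β₁₂₁) * (1 - β₁₂₁ / β₂₂)) := by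
          rw [hB, hA, div_mul_eq_mul_div, one_mul,
            div_eq_div_iff hApos.ne' (mul_pos h1β₁ honelam).ne']
          ring
        rw [hBe]
        refine one_div_le_one_div_of_le (mul_pos h1β₁ honelam) ?_
        nlinarith
      have hstep : (1 / (1 - β₁₂₁)) * T ≤ B * ((1 - β₂₂) * T) := by
        calc (1 / (1 - β₁₂₁)) * T ≤ (B * (1 - β₂₂)) * T :=
              mul_le_mul_of_nonneg_right hc hTnn
          _ = B * ((1 - β₂₂) * T) := by ring
      calc (m t p q) ^ 2 ≤ (1 / (1 - β₁₂₁)) * T := hm2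
        _ ≤ B * ((1 - β₂₂) * T) := hstep
        _ ≤ B * vhat p q := mul_le_mul_of_nonneg_left hvT hBpos.le
  calc ∑ p, ∑ q, (m t p q / Real.sqrt (vhat p q)) ^ 2
      ≤ ∑ p : Fin n, ∑ q : Fin d, B :=
        Finset.sum_le_sum fun p _ => Finset.sum_le_sum fun q _ => key p q
    _ = (n : ℝ) * (d : ℝ) * B := by
        simp [Finset.sum_const, Finset.card_univ, nsmul_eq_mul]; ring
    _ = (n : ℝ) * (d : ℝ) / A := by rw [hB]; ring
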